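/- Under the setup of the bias decomposition theorem with normalized weights ($\int h_+ \, dG = \int h_- \, dG = 1$), suppose there exist constants $M, M' \geq 0$ and $\alpha_{(0)}, \tau \in \mathbb{R}$ with $|\alpha_{(0)}(u) - \alpha_{(0)}| \leq M$ and $|\tau(u) - \tau| \leq M'$ for all $u$. Let $w : \mathbb{R} \to [0, \infty)$ satisfy $\int w(u)\, dG(u) = 1$ and define $\tau_w = \int w(u)\tau(u)\, dG(u)$. Then $|\mathbb{E}[\gamma_+(Z) Y \mathbf{1}\{Z \geq c\}] - \mathbb{E}[\gamma_-(Z) Y \mathbf{1}\{Z < c\}] - \tau_w| \leq M \sup_u |h_+(u) - h_-(u)| + M' \sup_u |h_+(u) - w(u)|$. -/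

import Mathlib

open MeasureTheory

/-- Corollary 2: bias bound for weighted estimators targeting a weighted
treatment effect `τ_w`, with uniform bounds `M` on the variation of `α₀` and
`M'` on the variation of `τ`, quantified over arbitrary uniform bounds on
`|h₊ - h₋|` and `|h₊ - w|` (hence bounding by the suprema). -/
theorem stmt2
    {Ω : Type*} [MeasurableSpace Ω] (P : Measure Ω) [IsProbabilityMeasure P]
    (U Z Y0 Y1 : Ω → ℝ)
    (hUm : Measurable U) (hZm : Measurable Z)
    (hY0m : Measurable Y0) (hY1m : Measurable Y1)
    (CY : ℝ) (hY0b : ∀ ω, |Y0 ω| ≤ CY) (hY1b : ∀ ω, |Y1 ω| ≤ CY)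
    (G : Measure ℝ) [IsProbabilityMeasure G]
    (lam : Measure ℝ) [SigmaFinite lam]
    (p : ℝ → ℝ → ℝ) (hpm : Measurable (Function.uncurry p)) (hpnn : ∀ z u, 0 ≤ p z u)
    (α0 α1 τ : ℝ → ℝ) (hα0m : Measurable α0) (hα1m : Measurable α1)
    (hτdef : ∀ u, τ u = α1 u - α0 u)
    (hJoint0 : ∀ g φf : ℝ → ℝ, Measurable g → Measurable φf →
      (∃ Cg, ∀ z, |g z| ≤ Cg) → (∃ Cf, ∀ u, |φf u| ≤ Cf) →
      ∫ ω, Y0 ω * g (Z ω) * φf (U ω) ∂P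
        = ∫ u, α0 u * (∫ z, g z * p z u ∂lam) * φf u ∂G)
    (hJoint1 : ∀ g φf : ℝ → ℝ, Measurable g → Measurable φf →
      (∃ Cg, ∀ z, |g z| ≤ Cg) → (∃ Cf, ∀ u, |φf u| ≤ Cf) →
      ∫ ω, Y1 ω * g (Z ω) * φf (U ω) ∂P
        = ∫ u, α1 u * (∫ z, g z * p z u ∂lam) * φf u ∂G)
    (hDens : ∀ g : ℝ → ℝ, Measurable g → (∃ Cg, ∀ z, |g z| ≤ Cg) →
      ∫ ω, g (Z ω) ∂P = ∫ u, (∫ z, g z * p z u ∂lam) ∂G)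
    (c : ℝ) (γp γm : ℝ → ℝ) (hγpm : Measurable γp) (hγmm : Measurable γm)
    (Cγ : ℝ) (hγpb : ∀ z, |γp z| ≤ Cγ) (hγmb : ∀ z, |γm z| ≤ Cγ)
    (hplus hminus : ℝ → ℝ)
    (hhp : ∀ u, hplus u = ∫ z in Set.Ici c, γp z * p z u ∂lam)
    (hhm : ∀ u, hminus u = ∫ z in Set.Iio c, γm z * p z u ∂lam)
    -- normalization of the weights:
    (hnormp : ∫ ω, (if c ≤ Z ω then γp (Z ω) else 0) ∂P = 1)
    (hnormm : ∫ ω, (if Z ω < c then γm (Z ω) else 0) ∂P = 1)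
    -- uniform bounds on the variation of α₀ and τ:
    (M M' a0 τ0 : ℝ) (hMa : ∀ u, |α0 u - a0| ≤ M) (hM't : ∀ u, |τ u - τ0| ≤ M')
    -- target weight function:
    (w : ℝ → ℝ) (hwm : Measurable w) (hwnn : ∀ u, 0 ≤ w u)
    (hwint : ∫ u, w u ∂G = 1)
    (τw : ℝ) (hτw : τw = ∫ u, w u * τ u ∂G) :
    ∀ B B' : ℝ, (∀ u, |hplus u - hminus u| ≤ B) → (∀ u, |hplus u - w u| ≤ B') →
      |(∫ ω, (if c ≤ Z ω then γp (Z ω) * (if c ≤ Z ω then Y1 ω else Y0 ω) else 0) ∂P)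
        - (∫ ω, (if Z ω < c then γm (Z ω) * (if c ≤ Z ω then Y1 ω else Y0 ω) else 0) ∂P)
        - τw| ≤ M * B + M' * B' := by
  intro B B' hB hB'
  have hCγ0 : 0 ≤ Cγ := le_trans (abs_nonneg _) (hγpb 0)
  -- truncated weight functions
  set gp : ℝ → ℝ := fun z => if c ≤ z then γp z else 0 with hgp
  set gm : ℝ → ℝ := fun z => if z < c then γm z else 0 with hgm
  have hgpmeas : Measurable gp := Measurable.ite measurableSet_Ici hγpm measurable_const
  have hgmmeas : Measurable gm := Measurable.ite measurableSet_Iio hγmm measurable_const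
  have hgpb : ∀ z, |gp z| ≤ Cγ := by
    intro z; by_cases h : c ≤ z <;> simp [hgp, h, hγpb z, hCγ0]
  have hgmb : ∀ z, |gm z| ≤ Cγ := by
    intro z; by_cases h : z < c <;> simp [hgm, h, hγmb z, hCγ0]
  -- the truncated integrals are h₊, h₋
  have hplus_eq : ∀ u, (∫ z, gp z * p z u ∂lam) = hplus u := by
    intro u
    rw [hhp u, ← integral_indicator measurableSet_Ici]
    congr 1; funext z
    by_cases h : c ≤ z <;> simp [hgp, Set.indicator, Set.mem_Ici, h]
  have hminus_eq : ∀ u, (∫ z, gm z * p z u ∂lam) = hminus u := by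
    intro u
    rw [hhm u, ← integral_indicator measurableSet_Iio]
    congr 1; funext z
    by_cases h : z < c <;> simp [hgm, Set.indicator, Set.mem_Iio, h]
  -- normalization: ∫ h₊ = ∫ h₋ = 1
  have ihp : ∫ u, hplus u ∂G = 1 := by
    have h := hDens gp hgpmeas ⟨Cγ, hgpb⟩
    simp only [hplus_eq] at h
    rw [← h]; exact hnormp
  have ihm : ∫ u, hminus u ∂G = 1 := by
    have h := hDens gm hgmmeas ⟨Cγ, hgmb⟩
    simp only [hminus_eq] at h
    rw [← h]; exact hnormm
  have int_hp : Integrable hplus G := by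
    by_contra h; rw [integral_undef h] at ihp; norm_num at ihp
  have int_hm : Integrable hminus G := by
    by_contra h; rw [integral_undef h] at ihm; norm_num at ihm
  have int_w : Integrable w G := by
    by_contra h; rw [integral_undef h] at hwint; norm_num at hwint
  -- measurability / boundedness of α's and τ
  have hτm : Measurable τ := by
    have : τ = fun u => α1 u - α0 u := funext hτdef
    rw [this]; exact hα1m.sub hα0m
  have hM0 : 0 ≤ M := le_trans (abs_nonneg _) (hMa 0)
  have hM'0 : 0 ≤ M' := le_trans (abs_nonneg _) (hM't 0)
  have bα0 : ∀ u, ‖α0 u‖ ≤ |a0| + M := by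
    intro u
    have := hMa u
    rw [Real.norm_eq_abs]
    calc |α0 u| = |(α0 u - a0) + a0| := by ring_nf
      _ ≤ |α0 u - a0| + |a0| := abs_add_le _ _
      _ ≤ M + |a0| := by linarith
      _ = |a0| + M := by ring
  have bτ : ∀ u, ‖τ u‖ ≤ |τ0| + M' := by
    intro u
    have := hM't u
    rw [Real.norm_eq_abs]
    calc |τ u| = |(τ u - τ0) + τ0| := by ring_nf
      _ ≤ |τ u - τ0| + |τ0| := abs_add_le _ _
      _ ≤ M' + |τ0| := by linarith
      _ = |τ0| + M' := by ring
  have bα1 : ∀ u, ‖α1 u‖ ≤ |a0| + M + |τ0| + M' := by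
    intro u
    have h1 := bα0 u; have h2 := bτ u
    have : α1 u = τ u + α0 u := by have := hτdef u; linarith
    rw [Real.norm_eq_abs, this]
    calc |τ u + α0 u| ≤ |τ u| + |α0 u| := abs_add_le _ _
      _ ≤ (|τ0| + M') + (|a0| + M) := by
          rw [Real.norm_eq_abs] at h1 h2; linarith
      _ = |a0| + M + |τ0| + M' := by ring
  -- integrability of all products
  have int_f1 : Integrable (fun u => α1 u * hplus u) G :=
    int_hp.bdd_mul hα1m.aestronglyMeasurable (Filter.Eventually.of_forall bα1)
  have int_f2 : Integrable (fun u => α0 u * hminus u) G :=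
    int_hm.bdd_mul hα0m.aestronglyMeasurable (Filter.Eventually.of_forall bα0)
  have int_f3 : Integrable (fun u => w u * τ u) G := by
    have : Integrable (fun u => τ u * w u) G :=
      int_w.bdd_mul hτm.aestronglyMeasurable (Filter.Eventually.of_forall bτ)
    exact this.congr (Filter.Eventually.of_forall fun u => mul_comm _ _)
  have int_A : Integrable (fun u => (α0 u - a0) * (hplus u - hminus u)) G :=
    (int_hp.sub int_hm).bdd_mul (hα0m.sub measurable_const).aestronglyMeasurable
      (c := M) (Filter.Eventually.of_forall fun u => by simpa [Real.norm_eq_abs] using hMa u)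
  have int_C : Integrable (fun u => (τ u - τ0) * (hplus u - w u)) G :=
    (int_hp.sub int_w).bdd_mul (hτm.sub measurable_const).aestronglyMeasurable
      (c := M') (Filter.Eventually.of_forall fun u => by simpa [Real.norm_eq_abs] using hM't u)
  have int_D : Integrable (fun u => a0 * (hplus u - hminus u)) G :=
    (int_hp.sub int_hm).const_mul a0
  have int_E : Integrable (fun u => τ0 * (hplus u - w u)) G :=
    (int_hp.sub int_w).const_mul τ0
  -- identify the two observed integrals
  have I1 : (∫ ω, (if c ≤ Z ω then γp (Z ω) * (if c ≤ Z ω then Y1 ω else Y0 ω) else 0) ∂P)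
      = ∫ u, α1 u * hplus u ∂G := by
    have h1 : (∫ ω, (if c ≤ Z ω then γp (Z ω) * (if c ≤ Z ω then Y1 ω else Y0 ω) else 0) ∂P)
        = ∫ ω, Y1 ω * gp (Z ω) * (fun _ : ℝ => (1:ℝ)) (U ω) ∂P := by
      congr 1; funext ω
      by_cases h : c ≤ Z ω <;> simp [hgp, h] <;> ring
    rw [h1, hJoint1 gp (fun _ => 1) hgpmeas measurable_const ⟨Cγ, hgpb⟩
      ⟨1, fun _ => by norm_num⟩]
    simp only [hplus_eq, mul_one]
  have I2 : (∫ ω, (if Z ω < c then γm (Z ω) * (if c ≤ Z ω then Y1 ω else Y0 ω) else 0) ∂P)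
      = ∫ u, α0 u * hminus u ∂G := by
    have h1 : (∫ ω, (if Z ω < c then γm (Z ω) * (if c ≤ Z ω then Y1 ω else Y0 ω) else 0) ∂P)
        = ∫ ω, Y0 ω * gm (Z ω) * (fun _ : ℝ => (1:ℝ)) (U ω) ∂P := by
      congr 1; funext ω
      by_cases h : Z ω < c
      · rw [if_pos h, if_neg (not_le.mpr h)]
        simp only [hgm, if_pos h]; ring
      · rw [if_neg h]; simp [hgm, h]
    rw [h1, hJoint0 gm (fun _ => 1) hgmmeas measurable_const ⟨Cγ, hgmb⟩
      ⟨1, fun _ => by norm_num⟩]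
    simp only [hminus_eq, mul_one]
  -- main decomposition
  have comb : (∫ u, α1 u * hplus u ∂G) - (∫ u, α0 u * hminus u ∂G) - (∫ u, w u * τ u ∂G)
      = (∫ u, (α0 u - a0) * (hplus u - hminus u) ∂G)
        + (∫ u, (τ u - τ0) * (hplus u - w u) ∂G) := by
    have int_f12 : Integrable (fun u => α1 u * hplus u - α0 u * hminus u) G :=
      int_f1.sub int_f2
    rw [← integral_sub int_f1 int_f2, ← integral_sub int_f12 int_f3]
    have hfun : (fun u => α1 u * hplus u - α0 u * hminus u - w u * τ u)
        = fun u => ((α0 u - a0) * (hplus u - hminus u) + (τ u - τ0) * (hplus u - w u))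
          + (a0 * (hplus u - hminus u) + τ0 * (hplus u - w u)) := by
      funext u
      have h := hτdef u
      have hα1 : α1 u = τ u + α0 u := by linarith
      rw [hα1]; ring
    have int_AC : Integrable (fun u => (α0 u - a0) * (hplus u - hminus u)
        + (τ u - τ0) * (hplus u - w u)) G := int_A.add int_C
    have int_DE : Integrable (fun u => a0 * (hplus u - hminus u)
        + τ0 * (hplus u - w u)) G := int_D.add int_E
    rw [hfun, integral_add int_AC int_DE,
      integral_add int_A int_C, integral_add int_D int_E,
      integral_const_mul, integral_const_mul,
      integral_sub int_hp int_hm, integral_sub int_hp int_w,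
      ihp, ihm, hwint]
    ring
  rw [I1, I2, hτw, comb]
  -- final bound
  have b1 : |∫ u, (α0 u - a0) * (hplus u - hminus u) ∂G| ≤ M * B := by
    have h := norm_integral_le_of_norm_le_const (μ := G) (C := M * B)
      (f := fun u => (α0 u - a0) * (hplus u - hminus u))
      (Filter.Eventually.of_forall fun u => by
        rw [Real.norm_eq_abs, abs_mul]
        exact mul_le_mul (hMa u) (hB u) (abs_nonneg _) hM0)
    simpa [Real.norm_eq_abs] using h
  have b2 : |∫ u, (τ u - τ0) * (hplus u - w u) ∂G| ≤ M' * B' := by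
    have h := norm_integral_le_of_norm_le_const (μ := G) (C := M' * B')
      (f := fun u => (τ u - τ0) * (hplus u - w u))
      (Filter.Eventually.of_forall fun u => by
        rw [Real.norm_eq_abs, abs_mul]
        exact mul_le_mul (hM't u) (hB' u) (abs_nonneg _) hM'0)
    simpa [Real.norm_eq_abs] using h
  calc |(∫ u, (α0 u - a0) * (hplus u - hminus u) ∂G)
        + (∫ u, (τ u - τ0) * (hplus u - w u) ∂G)|
      ≤ |∫ u, (α0 u - a0) * (hplus u - hminus u) ∂G|
        + |∫ u, (τ u - τ0) * (hplus u - w u) ∂G| := abs_add_le _ _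
    _ ≤ M * B + M' * B' := add_le_add b1 b2
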